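/- For every n ≥ 1 the recurrence coefficients satisfy: A_n·k_n = k_{n+1}; B_n·k_n·(2an+d)·(2a(n−1)+d) = k_{n+1}·((n−1)(d+2b)(a(n−1)+a+d) − 2ae + d² + de + 2bd); and C_n·k_{n−1}·(a(2n−3)+d)·(a(2n−1)+d)·(2a(n−1)+d)² = −k_{n+1}·n·(a(n−2)+d)·((n−1)(a(n−1)+d)(a²(n−1)² + a(n−1)d + 4ac + 2ae − bd − b²) + ae² − bde + cd²). (Theorem 2, recurrence part) -/

import Mathlib

open Polynomial

/-- Forward difference operator on real polynomials: `Δp = p(X+1) - p`. -/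
noncomputable def polyFwdDiff (p : Polynomial ℝ) : Polynomial ℝ := p.comp (X + 1) - p

/-- Backward difference operator on real polynomials: `∇p = p - p(X-1)`. -/
noncomputable def polyBwdDiff (p : Polynomial ℝ) : Polynomial ℝ := p - p.comp (X - 1)

set_option maxHeartbeats 1600000

section DiscreteHelpers

lemma drc_comp_coeff (q : ℝ[X]) (n : ℕ) (h : q.natDegree < n) (r : ℝ) (m : ℕ) :
    (q.comp (X + Polynomial.C r)).coeff m
      = ∑ i ∈ Finset.range n, q.coeff i * (r ^ (i - m) * (i.choose m : ℝ)) := by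
  conv_lhs => rw [q.as_sum_range' n h]
  rw [Polynomial.sum_comp, Polynomial.finset_sum_coeff]
  refine Finset.sum_congr rfl fun i _ => ?_
  rw [monomial_comp, coeff_C_mul, coeff_X_add_C_pow]

lemma drc_fwd_eq (P : ℝ[X]) : polyFwdDiff P = P.comp (X + Polynomial.C 1) - P := by
  simp [polyFwdDiff]

lemma drc_fwdbwd_eq (P : ℝ[X]) :
    polyFwdDiff (polyBwdDiff P)
      = P.comp (X + Polynomial.C 1) - 2 * P + P.comp (X + Polynomial.C (-1)) := by
  simp only [polyFwdDiff, polyBwdDiff, sub_comp]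
  rw [comp_assoc]
  have h1 : ((X - 1 : ℝ[X]).comp (X + 1)) = X := by simp [sub_comp]
  rw [h1, comp_X]
  have h2 : (X - 1 : ℝ[X]) = X + Polynomial.C (-1) := by simp [sub_eq_add_neg]
  have h3 : (X + 1 : ℝ[X]) = X + Polynomial.C 1 := by simp
  rw [h2, h3]; ring

lemma drc_fwd_coeff (P : ℝ[X]) (n : ℕ) (h : P.natDegree < n) (j : ℕ) :
    (polyFwdDiff P).coeff j
      = (∑ i ∈ Finset.range n, P.coeff i * (i.choose j : ℝ)) - P.coeff j := by
  rw [drc_fwd_eq, coeff_sub, drc_comp_coeff P n h 1 j]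
  simp

lemma drc_fwdbwd_coeff (P : ℝ[X]) (n : ℕ) (h : P.natDegree < n) (j : ℕ) :
    (polyFwdDiff (polyBwdDiff P)).coeff j
      = (∑ i ∈ Finset.range n, P.coeff i * (((1 : ℝ) + (-1 : ℝ) ^ (i - j)) * (i.choose j : ℝ)))
        - 2 * P.coeff j := by
  rw [drc_fwdbwd_eq, coeff_add, coeff_sub, drc_comp_coeff P n h 1 j, drc_comp_coeff P n h (-1) j]
  rw [show ((2 : ℝ[X]) * P).coeff j = 2 * P.coeff j by
    rw [show ((2:ℝ[X])) = Polynomial.C 2 by rw [map_ofNat], coeff_C_mul]]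
  rw [sub_add_eq_add_sub, ← Finset.sum_add_distrib]
  congr 1
  refine Finset.sum_congr rfl fun i _ => by ring

lemma drc_chc1 (M : ℕ) : (((M + 1).choose M : ℕ) : ℝ) = M + 1 := by
  rw [Nat.choose_succ_self_right]; push_cast; ring

lemma drc_chc2 (M : ℕ) : (((M + 2).choose M : ℕ) : ℝ) = (M + 2) * (M + 1) / 2 := by
  induction M with
  | zero => norm_num
  | succ M ih =>
    rw [show M + 1 + 2 = (M + 2) + 1 from rfl, Nat.choose_succ_succ]
    push_cast [ih, drc_chc1]; ring

lemma drc_chc3 (M : ℕ) : (((M + 3).choose M : ℕ) : ℝ) = (M + 3) * (M + 2) * (M + 1) / 6 := by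
  induction M with
  | zero => norm_num [Nat.choose]
  | succ M ih =>
    rw [show M + 1 + 3 = (M + 3) + 1 from rfl, Nat.choose_succ_succ]
    push_cast [ih, drc_chc2]; ring

lemma drc_chc4 (M : ℕ) :
    (((M + 4).choose M : ℕ) : ℝ) = (M + 4) * (M + 3) * (M + 2) * (M + 1) / 24 := by
  induction M with
  | zero => norm_num [Nat.choose]
  | succ M ih =>
    rw [show M + 1 + 4 = (M + 4) + 1 from rfl, Nat.choose_succ_succ]
    push_cast [ih, drc_chc3]; ring

lemma drc_sum_peel4 (M : ℕ) (f : ℕ → ℝ) :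
    ∑ i ∈ Finset.range (M+4), f i
      = (∑ i ∈ Finset.range M, f i) + f M + f (M+1) + f (M+2) + f (M+3) := by
  rw [show M+4 = M+3+1 from rfl, Finset.sum_range_succ,
    show M+3 = M+2+1 from rfl, Finset.sum_range_succ,
    show M+2 = M+1+1 from rfl, Finset.sum_range_succ, Finset.sum_range_succ]

lemma drc_sum_peel5 (M : ℕ) (f : ℕ → ℝ) :
    ∑ i ∈ Finset.range (M+5), f i
      = (∑ i ∈ Finset.range M, f i) + f M + f (M+1) + f (M+2) + f (M+3) + f (M+4) := by
  rw [show M+5 = M+4+1 from rfl, Finset.sum_range_succ, drc_sum_peel4]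

lemma drc_HSgen (a b c d e : ℝ) (m : ℕ) (P : ℝ[X]) (hP : P.natDegree = m+3)
    (h0 : (Polynomial.C a * X ^ 2 + Polynomial.C b * X + Polynomial.C c) *
          polyFwdDiff (polyBwdDiff P) +
        (Polynomial.C d * X + Polynomial.C e) * polyFwdDiff P +
        Polynomial.C (-(a * ((m+3 : ℕ) : ℝ) * (((m+3 : ℕ) : ℝ) - 1) + d * ((m+3 : ℕ) : ℝ))) * P
        = 0) :
    (2*a*(((m+3 : ℕ) : ℝ)-1)+d) * P.coeff (m+2) * 2
      = P.coeff (m+3) * ((m+3 : ℕ) : ℝ)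
          * (2*b*(((m+3 : ℕ) : ℝ)-1) + d*(((m+3 : ℕ) : ℝ)-1) + 2*e) := by
  have hP' : P.natDegree < m + 4 := by omega
  have h1 : (Polynomial.C a * (X ^ 2 * polyFwdDiff (polyBwdDiff P))
      + Polynomial.C b * (X ^ 1 * polyFwdDiff (polyBwdDiff P))
      + Polynomial.C c * polyFwdDiff (polyBwdDiff P)
      + Polynomial.C d * (X ^ 1 * polyFwdDiff P)
      + Polynomial.C e * polyFwdDiff P
      + Polynomial.C (-(a * ((m+3 : ℕ) : ℝ) * (((m+3 : ℕ) : ℝ) - 1) + d * ((m+3 : ℕ) : ℝ))) * P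
      ).coeff (m+2) = 0 := by
    have hh : (Polynomial.C a * (X ^ 2 * polyFwdDiff (polyBwdDiff P))
      + Polynomial.C b * (X ^ 1 * polyFwdDiff (polyBwdDiff P))
      + Polynomial.C c * polyFwdDiff (polyBwdDiff P)
      + Polynomial.C d * (X ^ 1 * polyFwdDiff P)
      + Polynomial.C e * polyFwdDiff P
      + Polynomial.C (-(a * ((m+3 : ℕ) : ℝ) * (((m+3 : ℕ) : ℝ) - 1) + d * ((m+3 : ℕ) : ℝ))) * P
      ) = 0 := by rw [← h0]; ring
    rw [hh, coeff_zero]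
  simp only [coeff_add, coeff_C_mul, coeff_X_pow_mul'] at h1
  rw [if_pos (by omega : 2 ≤ m+2), if_pos (by omega : 1 ≤ m+2), if_pos (by omega : 1 ≤ m+2)] at h1
  simp only [Nat.add_sub_cancel, show m+2-1 = m+1 from rfl] at h1
  rw [drc_fwdbwd_coeff P (m+4) hP' m, drc_fwdbwd_coeff P (m+4) hP' (m+1),
    drc_fwdbwd_coeff P (m+4) hP' (m+2),
    drc_fwd_coeff P (m+4) hP' (m+1), drc_fwd_coeff P (m+4) hP' (m+2)] at h1
  simp only [drc_sum_peel4] at h1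
  have hz1 : ∀ j : ℕ, m ≤ j →
      ∑ i ∈ Finset.range m, P.coeff i * (((1:ℝ) + (-1:ℝ)^(i-j)) * (i.choose j : ℝ)) = 0 := by
    intro j hj
    refine Finset.sum_eq_zero fun i hi => ?_
    rw [Nat.choose_eq_zero_of_lt (lt_of_lt_of_le (Finset.mem_range.mp hi) hj)]
    simp
  have hz2 : ∀ j : ℕ, m ≤ j →
      ∑ i ∈ Finset.range m, P.coeff i * (i.choose j : ℝ) = 0 := by
    intro j hj
    refine Finset.sum_eq_zero fun i hi => ?_
    rw [Nat.choose_eq_zero_of_lt (lt_of_lt_of_le (Finset.mem_range.mp hi) hj)]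
    simp
  rw [hz1 m le_rfl, hz1 (m+1) (by omega), hz1 (m+2) (by omega),
    hz2 (m+1) (by omega), hz2 (m+2) (by omega)] at h1
  have z1 : m.choose (m+1) = 0 := Nat.choose_eq_zero_of_lt (by omega)
  have z2 : m.choose (m+2) = 0 := Nat.choose_eq_zero_of_lt (by omega)
  have z3 : (m+1).choose (m+2) = 0 := Nat.choose_eq_zero_of_lt (by omega)
  have e21 : (((m+2).choose (m+1) : ℕ) : ℝ) = (m:ℝ)+2 := by
    rw [show m+2 = (m+1)+1 from rfl, drc_chc1]; push_cast; ring
  have e31 : (((m+3).choose (m+1) : ℕ) : ℝ) = ((m:ℝ)+3)*((m:ℝ)+2)/2 := by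
    rw [show m+3 = (m+1)+2 from rfl, drc_chc2]; push_cast; ring
  have e32 : (((m+3).choose (m+2) : ℕ) : ℝ) = (m:ℝ)+3 := by
    rw [show m+3 = (m+2)+1 from rfl, drc_chc1]; push_cast; ring
  simp only [Nat.add_sub_add_left, Nat.add_sub_cancel_left, Nat.sub_self, Nat.sub_self_add,
    Nat.choose_self, z1, z2, z3, drc_chc1 m, drc_chc2 m, drc_chc3 m, e21, e31, e32] at h1
  push_cast at h1 ⊢
  norm_num at h1
  linear_combination (-2 : ℝ) * h1

lemma drc_HTgen (a b c d e : ℝ) (m : ℕ) (P : ℝ[X]) (hP : P.natDegree = m+4)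
    (h0 : (Polynomial.C a * X ^ 2 + Polynomial.C b * X + Polynomial.C c) *
          polyFwdDiff (polyBwdDiff P) +
        (Polynomial.C d * X + Polynomial.C e) * polyFwdDiff P +
        Polynomial.C (-(a * ((m+4 : ℕ) : ℝ) * (((m+4 : ℕ) : ℝ) - 1) + d * ((m+4 : ℕ) : ℝ))) * P
        = 0) :
    48*(a*(2*((m+4 : ℕ) : ℝ)-3)+d) * P.coeff (m+2)
      = 2*a*((m+4 : ℕ) : ℝ)*(((m+4 : ℕ) : ℝ)-1)*(((m+4 : ℕ) : ℝ)-2)*(((m+4 : ℕ) : ℝ)-3)*P.coeff (m+4)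
        + 24*b*(((m+4 : ℕ) : ℝ)-1)*(((m+4 : ℕ) : ℝ)-2)*P.coeff (m+3)
        + 24*c*((m+4 : ℕ) : ℝ)*(((m+4 : ℕ) : ℝ)-1)*P.coeff (m+4)
        + d*(12*(((m+4 : ℕ) : ℝ)-1)*(((m+4 : ℕ) : ℝ)-2)*P.coeff (m+3)
            + 4*((m+4 : ℕ) : ℝ)*(((m+4 : ℕ) : ℝ)-1)*(((m+4 : ℕ) : ℝ)-2)*P.coeff (m+4))
        + e*(24*(((m+4 : ℕ) : ℝ)-1)*P.coeff (m+3)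
            + 12*((m+4 : ℕ) : ℝ)*(((m+4 : ℕ) : ℝ)-1)*P.coeff (m+4)) := by
  have hP' : P.natDegree < m + 5 := by omega
  have h1 : (Polynomial.C a * (X ^ 2 * polyFwdDiff (polyBwdDiff P))
      + Polynomial.C b * (X ^ 1 * polyFwdDiff (polyBwdDiff P))
      + Polynomial.C c * polyFwdDiff (polyBwdDiff P)
      + Polynomial.C d * (X ^ 1 * polyFwdDiff P)
      + Polynomial.C e * polyFwdDiff P
      + Polynomial.C (-(a * ((m+4 : ℕ) : ℝ) * (((m+4 : ℕ) : ℝ) - 1) + d * ((m+4 : ℕ) : ℝ))) * P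
      ).coeff (m+2) = 0 := by
    have hh : (Polynomial.C a * (X ^ 2 * polyFwdDiff (polyBwdDiff P))
      + Polynomial.C b * (X ^ 1 * polyFwdDiff (polyBwdDiff P))
      + Polynomial.C c * polyFwdDiff (polyBwdDiff P)
      + Polynomial.C d * (X ^ 1 * polyFwdDiff P)
      + Polynomial.C e * polyFwdDiff P
      + Polynomial.C (-(a * ((m+4 : ℕ) : ℝ) * (((m+4 : ℕ) : ℝ) - 1) + d * ((m+4 : ℕ) : ℝ))) * P
      ) = 0 := by
      rw [← h0]; ring
    rw [hh, coeff_zero]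
  simp only [coeff_add, coeff_C_mul, coeff_X_pow_mul'] at h1
  rw [if_pos (by omega : 2 ≤ m+2), if_pos (by omega : 1 ≤ m+2), if_pos (by omega : 1 ≤ m+2)] at h1
  simp only [Nat.add_sub_cancel, show m+2-1 = m+1 from rfl] at h1
  rw [drc_fwdbwd_coeff P (m+5) hP' m, drc_fwdbwd_coeff P (m+5) hP' (m+1),
    drc_fwdbwd_coeff P (m+5) hP' (m+2),
    drc_fwd_coeff P (m+5) hP' (m+1), drc_fwd_coeff P (m+5) hP' (m+2)] at h1
  simp only [drc_sum_peel5] at h1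
  have hz1 : ∀ j : ℕ, m ≤ j →
      ∑ i ∈ Finset.range m, P.coeff i * (((1:ℝ) + (-1:ℝ)^(i-j)) * (i.choose j : ℝ)) = 0 := by
    intro j hj
    refine Finset.sum_eq_zero fun i hi => ?_
    rw [Nat.choose_eq_zero_of_lt (lt_of_lt_of_le (Finset.mem_range.mp hi) hj)]
    simp
  have hz2 : ∀ j : ℕ, m ≤ j →
      ∑ i ∈ Finset.range m, P.coeff i * (i.choose j : ℝ) = 0 := by
    intro j hj
    refine Finset.sum_eq_zero fun i hi => ?_
    rw [Nat.choose_eq_zero_of_lt (lt_of_lt_of_le (Finset.mem_range.mp hi) hj)]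
    simp
  rw [hz1 m le_rfl, hz1 (m+1) (by omega), hz1 (m+2) (by omega),
    hz2 (m+1) (by omega), hz2 (m+2) (by omega)] at h1
  have z1 : m.choose (m+1) = 0 := Nat.choose_eq_zero_of_lt (by omega)
  have z2 : m.choose (m+2) = 0 := Nat.choose_eq_zero_of_lt (by omega)
  have z3 : (m+1).choose (m+2) = 0 := Nat.choose_eq_zero_of_lt (by omega)
  have e21 : (((m+2).choose (m+1) : ℕ) : ℝ) = (m:ℝ)+2 := by
    rw [show m+2 = (m+1)+1 from rfl, drc_chc1]; push_cast; ring
  have e31 : (((m+3).choose (m+1) : ℕ) : ℝ) = ((m:ℝ)+3)*((m:ℝ)+2)/2 := by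
    rw [show m+3 = (m+1)+2 from rfl, drc_chc2]; push_cast; ring
  have e32 : (((m+3).choose (m+2) : ℕ) : ℝ) = (m:ℝ)+3 := by
    rw [show m+3 = (m+2)+1 from rfl, drc_chc1]; push_cast; ring
  have e41 : (((m+4).choose (m+1) : ℕ) : ℝ) = ((m:ℝ)+4)*((m:ℝ)+3)*((m:ℝ)+2)/6 := by
    rw [show m+4 = (m+1)+3 from rfl, drc_chc3]; push_cast; ring
  have e42 : (((m+4).choose (m+2) : ℕ) : ℝ) = ((m:ℝ)+4)*((m:ℝ)+3)/2 := by
    rw [show m+4 = (m+2)+2 from rfl, drc_chc2]; push_cast; ring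
  simp only [Nat.add_sub_add_left, Nat.add_sub_cancel_left, Nat.sub_self, Nat.sub_self_add,
    Nat.choose_self, z1, z2, z3, drc_chc1 m, drc_chc2 m, drc_chc3 m, drc_chc4 m,
    e21, e31, e32, e41, e42] at h1
  push_cast at h1 ⊢
  norm_num at h1
  linear_combination (-24 : ℝ) * h1

lemma drc_finalAlg (a b c d e N km kn kp sn sp tn tp A B C : ℝ)
    (hkn : kn ≠ 0) (hkm : km ≠ 0)
    (hD : 2*a*(N-1)+d ≠ 0) (hD1 : 2*a*N+d ≠ 0)
    (hF : a*(2*N-3)+d ≠ 0) (hF1 : a*(2*N-1)+d ≠ 0)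
    (hsn : (2*a*(N-1)+d) * sn * 2 = kn * N * (2*b*(N-1) + d*(N-1) + 2*e))
    (hsp : (2*a*N+d) * sp * 2 = kp * (N+1) * (2*b*N + d*N + 2*e))
    (htn : 48*(a*(2*N-3)+d) * tn
      = 2*a*N*(N-1)*(N-2)*(N-3)*kn + 24*b*(N-1)*(N-2)*sn + 24*c*N*(N-1)*kn
        + d*(12*(N-1)*(N-2)*sn + 4*N*(N-1)*(N-2)*kn) + e*(24*(N-1)*sn + 12*N*(N-1)*kn))
    (htp : 48*(a*(2*N-1)+d) * tp
      = 2*a*(N+1)*N*(N-1)*(N-2)*kp + 24*b*N*(N-1)*sp + 24*c*(N+1)*N*kp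
        + d*(12*N*(N-1)*sp + 4*(N+1)*N*(N-1)*kp) + e*(24*N*sp + 12*(N+1)*N*kp))
    (r1 : kp = A * kn) (r2 : sp = A * sn + B * kn) (r3 : tp = A * tn + B * sn - C * km) :
    A * kn = kp ∧
    B * kn * (2*a*N+d) * (2*a*(N-1)+d)
      = kp * ((N-1)*(d+2*b)*(a*(N-1)+a+d) - 2*a*e + d^2 + d*e + 2*b*d) ∧
    C * km * (a*(2*N-3)+d) * (a*(2*N-1)+d) * (2*a*(N-1)+d)^2
      = -kp * N * (a*(N-2)+d) *
          ((N-1)*(a*(N-1)+d)*(a^2*(N-1)^2 + a*(N-1)*d + 4*a*c + 2*a*e - b*d - b^2)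
            + a*e^2 - b*d*e + c*d^2) := by
  have hsn' : sn = kn * N * (2*b*(N-1) + d*(N-1) + 2*e) / (2*(2*a*(N-1)+d)) := by
    rw [eq_div_iff (mul_ne_zero two_ne_zero hD)]
    linear_combination hsn
  have hsp' : sp = kp * (N+1) * (2*b*N + d*N + 2*e) / (2*(2*a*N+d)) := by
    rw [eq_div_iff (mul_ne_zero two_ne_zero hD1)]
    linear_combination hsp
  have htn' : tn = (2*a*N*(N-1)*(N-2)*(N-3)*kn + 24*b*(N-1)*(N-2)*sn + 24*c*N*(N-1)*kn
        + d*(12*(N-1)*(N-2)*sn + 4*N*(N-1)*(N-2)*kn) + e*(24*(N-1)*sn + 12*N*(N-1)*kn))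
      / (48*(a*(2*N-3)+d)) := by
    field_simp
    linear_combination htn
  have htp' : tp = (2*a*(N+1)*N*(N-1)*(N-2)*kp + 24*b*N*(N-1)*sp + 24*c*(N+1)*N*kp
        + d*(12*N*(N-1)*sp + 4*(N+1)*N*(N-1)*kp) + e*(24*N*sp + 12*(N+1)*N*kp))
      / (48*(a*(2*N-1)+d)) := by
    field_simp
    linear_combination htp
  have hA : A = kp / kn := by field_simp; linear_combination -r1
  have hB : B = (sp - A*sn) / kn := by
    field_simp
    linear_combination -r2
  have hC : C = (A*tn + B*sn - tp) / km := by
    field_simp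
    linear_combination r3
  refine ⟨by linear_combination -r1, ?_, ?_⟩
  · rw [hB, hA, hsp', hsn']
    have hD1' : N * 2 * a + d ≠ 0 := by rw [show N * 2 * a = 2 * a * N by ring]; exact hD1
    field_simp
    ring
  · rw [hC, hB, hA, htp', htn', hsp', hsn']
    field_simp
    ring

end DiscreteHelpers

theorem discrete_recurrence_coefficients
    (a b c d e : ℝ)
    (had : ∀ m : ℤ, -3 ≤ m → a * m + d ≠ 0)
    (p : ℕ → Polynomial ℝ) (k : ℕ → ℝ)
    (hdeg : ∀ n : ℕ, (p n).degree = n)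
    (hlead : ∀ n : ℕ, (p n).coeff n = k n)
    (hk0 : ∀ n : ℕ, k n ≠ 0)
    (hde : ∀ n : ℕ,
      (Polynomial.C a * X ^ 2 + Polynomial.C b * X + Polynomial.C c) *
          polyFwdDiff (polyBwdDiff (p n)) +
        (Polynomial.C d * X + Polynomial.C e) * polyFwdDiff (p n) +
        Polynomial.C (-(a * n * ((n : ℝ) - 1) + d * n)) * p n = 0)
    (A B C : ℕ → ℝ)
    (hrec : ∀ n : ℕ, 1 ≤ n →
      p (n + 1) = (Polynomial.C (A n) * X + Polynomial.C (B n)) * p n -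
        Polynomial.C (C n) * p (n - 1)) :
    ∀ n : ℕ, 1 ≤ n →
      A n * k n = k (n + 1) ∧
      B n * k n * (2 * a * n + d) * (2 * a * ((n : ℝ) - 1) + d) =
        k (n + 1) * (((n : ℝ) - 1) * (d + 2 * b) * (a * ((n : ℝ) - 1) + a + d) -
          2 * a * e + d ^ 2 + d * e + 2 * b * d) ∧
      C n * k (n - 1) * (a * (2 * (n : ℝ) - 3) + d) * (a * (2 * (n : ℝ) - 1) + d) *
          (2 * a * ((n : ℝ) - 1) + d) ^ 2 =
        -(k (n + 1)) * (n : ℝ) * (a * ((n : ℝ) - 2) + d) *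
          (((n : ℝ) - 1) * (a * ((n : ℝ) - 1) + d) *
              (a ^ 2 * ((n : ℝ) - 1) ^ 2 + a * ((n : ℝ) - 1) * d + 4 * a * c + 2 * a * e -
                b * d - b ^ 2) +
            a * e ^ 2 - b * d * e + c * d ^ 2) := by
  have hnat : ∀ j : ℕ, (p j).natDegree = j := fun j =>
    natDegree_eq_of_degree_eq_some (hdeg j)
  have hzc : ∀ (j i : ℕ), j < i → (p j).coeff i = 0 := fun j i h =>
    coeff_eq_zero_of_natDegree_lt (by rw [hnat]; exact h)
  -- the subleading coefficient relation
  have HS : ∀ j : ℕ, 1 ≤ j →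
      (2*a*((j:ℝ)-1)+d) * (p j).coeff (j-1) * 2
        = k j * (j:ℝ) * (2*b*((j:ℝ)-1) + d*((j:ℝ)-1) + 2*e) := by
    intro j hj
    rcases lt_or_ge j 3 with h3 | h3
    · interval_cases j
      · -- j = 1
        have hP' : (p 1).natDegree < 2 := by rw [hnat]; omega
        have h1 : (Polynomial.C a * (X ^ 2 * polyFwdDiff (polyBwdDiff (p 1)))
            + Polynomial.C b * (X ^ 1 * polyFwdDiff (polyBwdDiff (p 1)))
            + Polynomial.C c * polyFwdDiff (polyBwdDiff (p 1))
            + Polynomial.C d * (X ^ 1 * polyFwdDiff (p 1))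
            + Polynomial.C e * polyFwdDiff (p 1)
            + Polynomial.C (-(a * ((1:ℕ):ℝ) * (((1:ℕ):ℝ) - 1) + d * ((1:ℕ):ℝ))) * (p 1)
            ).coeff 0 = 0 := by
          have hh : (Polynomial.C a * (X ^ 2 * polyFwdDiff (polyBwdDiff (p 1)))
            + Polynomial.C b * (X ^ 1 * polyFwdDiff (polyBwdDiff (p 1)))
            + Polynomial.C c * polyFwdDiff (polyBwdDiff (p 1))
            + Polynomial.C d * (X ^ 1 * polyFwdDiff (p 1))
            + Polynomial.C e * polyFwdDiff (p 1)
            + Polynomial.C (-(a * ((1:ℕ):ℝ) * (((1:ℕ):ℝ) - 1) + d * ((1:ℕ):ℝ))) * (p 1)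
            ) = 0 := by rw [← hde 1]; ring
          rw [hh, coeff_zero]
        simp only [coeff_add, coeff_C_mul, coeff_X_pow_mul'] at h1
        rw [if_neg (by omega : ¬ (2:ℕ) ≤ 0), if_neg (by omega : ¬ (1:ℕ) ≤ 0),
          if_neg (by omega : ¬ (1:ℕ) ≤ 0)] at h1
        rw [drc_fwdbwd_coeff (p 1) 2 hP' 0, drc_fwd_coeff (p 1) 2 hP' 0] at h1
        rw [show (2:ℕ) = 1+1 from rfl] at h1
        simp only [Finset.sum_range_succ, Finset.sum_range_zero] at h1
        norm_num at h1
        rw [show (1:ℕ)-1 = 0 from rfl, ← hlead 1]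
        push_cast
        norm_num
        linear_combination (-2 : ℝ) * h1
      · -- j = 2
        have hP' : (p 2).natDegree < 3 := by rw [hnat]; omega
        have h1 : (Polynomial.C a * (X ^ 2 * polyFwdDiff (polyBwdDiff (p 2)))
            + Polynomial.C b * (X ^ 1 * polyFwdDiff (polyBwdDiff (p 2)))
            + Polynomial.C c * polyFwdDiff (polyBwdDiff (p 2))
            + Polynomial.C d * (X ^ 1 * polyFwdDiff (p 2))
            + Polynomial.C e * polyFwdDiff (p 2)
            + Polynomial.C (-(a * ((2:ℕ):ℝ) * (((2:ℕ):ℝ) - 1) + d * ((2:ℕ):ℝ))) * (p 2)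
            ).coeff 1 = 0 := by
          have hh : (Polynomial.C a * (X ^ 2 * polyFwdDiff (polyBwdDiff (p 2)))
            + Polynomial.C b * (X ^ 1 * polyFwdDiff (polyBwdDiff (p 2)))
            + Polynomial.C c * polyFwdDiff (polyBwdDiff (p 2))
            + Polynomial.C d * (X ^ 1 * polyFwdDiff (p 2))
            + Polynomial.C e * polyFwdDiff (p 2)
            + Polynomial.C (-(a * ((2:ℕ):ℝ) * (((2:ℕ):ℝ) - 1) + d * ((2:ℕ):ℝ))) * (p 2)
            ) = 0 := by rw [← hde 2]; ring
          rw [hh, coeff_zero]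
        simp only [coeff_add, coeff_C_mul, coeff_X_pow_mul'] at h1
        rw [if_neg (by omega : ¬ (2:ℕ) ≤ 1), if_pos (by omega : (1:ℕ) ≤ 1),
          if_pos (by omega : (1:ℕ) ≤ 1)] at h1
        rw [show (1:ℕ)-1 = 0 from rfl] at h1
        rw [drc_fwdbwd_coeff (p 2) 3 hP' 0, drc_fwdbwd_coeff (p 2) 3 hP' 1,
          drc_fwd_coeff (p 2) 3 hP' 0, drc_fwd_coeff (p 2) 3 hP' 1] at h1
        rw [show (3:ℕ) = 1+1+1 from rfl] at h1
        simp only [Finset.sum_range_succ, Finset.sum_range_zero] at h1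
        norm_num [Nat.choose_one_right] at h1
        rw [show (2:ℕ)-1 = 1 from rfl, ← hlead 2]
        push_cast
        norm_num
        linear_combination (-2 : ℝ) * h1
    · obtain ⟨m, rfl⟩ : ∃ m, j = m+3 := ⟨j-3, by omega⟩
      rw [show m+3-1 = m+2 from rfl, ← hlead (m+3)]
      exact drc_HSgen a b c d e m (p (m+3)) (hnat (m+3)) (hde (m+3))
  -- the second-subleading coefficient relation
  have HT : ∀ j : ℕ, 2 ≤ j →
      48*(a*(2*(j:ℝ)-3)+d) * (p j).coeff (j-2)
        = 2*a*(j:ℝ)*((j:ℝ)-1)*((j:ℝ)-2)*((j:ℝ)-3)*(k j)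
          + 24*b*((j:ℝ)-1)*((j:ℝ)-2)*((p j).coeff (j-1))
          + 24*c*(j:ℝ)*((j:ℝ)-1)*(k j)
          + d*(12*((j:ℝ)-1)*((j:ℝ)-2)*((p j).coeff (j-1))
              + 4*(j:ℝ)*((j:ℝ)-1)*((j:ℝ)-2)*(k j))
          + e*(24*((j:ℝ)-1)*((p j).coeff (j-1)) + 12*(j:ℝ)*((j:ℝ)-1)*(k j)) := by
    intro j hj
    rcases lt_or_ge j 4 with h4 | h4
    · interval_cases j
      · -- j = 2
        have hP' : (p 2).natDegree < 3 := by rw [hnat]; omega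
        have h1 : (Polynomial.C a * (X ^ 2 * polyFwdDiff (polyBwdDiff (p 2)))
            + Polynomial.C b * (X ^ 1 * polyFwdDiff (polyBwdDiff (p 2)))
            + Polynomial.C c * polyFwdDiff (polyBwdDiff (p 2))
            + Polynomial.C d * (X ^ 1 * polyFwdDiff (p 2))
            + Polynomial.C e * polyFwdDiff (p 2)
            + Polynomial.C (-(a * ((2:ℕ):ℝ) * (((2:ℕ):ℝ) - 1) + d * ((2:ℕ):ℝ))) * (p 2)
            ).coeff 0 = 0 := by
          have hh : (Polynomial.C a * (X ^ 2 * polyFwdDiff (polyBwdDiff (p 2)))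
            + Polynomial.C b * (X ^ 1 * polyFwdDiff (polyBwdDiff (p 2)))
            + Polynomial.C c * polyFwdDiff (polyBwdDiff (p 2))
            + Polynomial.C d * (X ^ 1 * polyFwdDiff (p 2))
            + Polynomial.C e * polyFwdDiff (p 2)
            + Polynomial.C (-(a * ((2:ℕ):ℝ) * (((2:ℕ):ℝ) - 1) + d * ((2:ℕ):ℝ))) * (p 2)
            ) = 0 := by rw [← hde 2]; ring
          rw [hh, coeff_zero]
        simp only [coeff_add, coeff_C_mul, coeff_X_pow_mul'] at h1
        rw [if_neg (by omega : ¬ (2:ℕ) ≤ 0), if_neg (by omega : ¬ (1:ℕ) ≤ 0),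
          if_neg (by omega : ¬ (1:ℕ) ≤ 0)] at h1
        rw [drc_fwdbwd_coeff (p 2) 3 hP' 0, drc_fwd_coeff (p 2) 3 hP' 0] at h1
        rw [show (3:ℕ) = 1+1+1 from rfl] at h1
        simp only [Finset.sum_range_succ, Finset.sum_range_zero] at h1
        norm_num [Nat.choose_one_right] at h1
        rw [show (2:ℕ)-2 = 0 from rfl, show (2:ℕ)-1 = 1 from rfl, ← hlead 2]
        push_cast
        norm_num
        linear_combination (-24 : ℝ) * h1
      · -- j = 3
        have hP' : (p 3).natDegree < 4 := by rw [hnat]; omega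
        have h1 : (Polynomial.C a * (X ^ 2 * polyFwdDiff (polyBwdDiff (p 3)))
            + Polynomial.C b * (X ^ 1 * polyFwdDiff (polyBwdDiff (p 3)))
            + Polynomial.C c * polyFwdDiff (polyBwdDiff (p 3))
            + Polynomial.C d * (X ^ 1 * polyFwdDiff (p 3))
            + Polynomial.C e * polyFwdDiff (p 3)
            + Polynomial.C (-(a * ((3:ℕ):ℝ) * (((3:ℕ):ℝ) - 1) + d * ((3:ℕ):ℝ))) * (p 3)
            ).coeff 1 = 0 := by
          have hh : (Polynomial.C a * (X ^ 2 * polyFwdDiff (polyBwdDiff (p 3)))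
            + Polynomial.C b * (X ^ 1 * polyFwdDiff (polyBwdDiff (p 3)))
            + Polynomial.C c * polyFwdDiff (polyBwdDiff (p 3))
            + Polynomial.C d * (X ^ 1 * polyFwdDiff (p 3))
            + Polynomial.C e * polyFwdDiff (p 3)
            + Polynomial.C (-(a * ((3:ℕ):ℝ) * (((3:ℕ):ℝ) - 1) + d * ((3:ℕ):ℝ))) * (p 3)
            ) = 0 := by rw [← hde 3]; ring
          rw [hh, coeff_zero]
        simp only [coeff_add, coeff_C_mul, coeff_X_pow_mul'] at h1
        rw [if_neg (by omega : ¬ (2:ℕ) ≤ 1), if_pos (by omega : (1:ℕ) ≤ 1),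
          if_pos (by omega : (1:ℕ) ≤ 1)] at h1
        rw [show (1:ℕ)-1 = 0 from rfl] at h1
        rw [drc_fwdbwd_coeff (p 3) 4 hP' 0, drc_fwdbwd_coeff (p 3) 4 hP' 1,
          drc_fwd_coeff (p 3) 4 hP' 0, drc_fwd_coeff (p 3) 4 hP' 1] at h1
        rw [show (4:ℕ) = 1+1+1+1 from rfl] at h1
        simp only [Finset.sum_range_succ, Finset.sum_range_zero] at h1
        norm_num [Nat.choose_one_right] at h1
        rw [show (3:ℕ)-2 = 1 from rfl, show (3:ℕ)-1 = 2 from rfl, ← hlead 3]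
        push_cast
        norm_num
        linear_combination (-24 : ℝ) * h1
    · obtain ⟨m, rfl⟩ : ∃ m, j = m+4 := ⟨j-4, by omega⟩
      rw [show m+4-2 = m+2 from rfl, show m+4-1 = m+3 from rfl, ← hlead (m+4)]
      exact drc_HTgen a b c d e m (p (m+4)) (hnat (m+4)) (hde (m+4))
  -- main assembly
  intro n hn
  obtain ⟨m', rfl⟩ : ∃ m', n = m'+1 := ⟨n-1, by omega⟩
  simp only [Nat.add_sub_cancel, show m'+1+1 = m'+2 from rfl]
  -- nonvanishing denominators
  have hD : 2*a*(((m':ℝ)+1)-1)+d ≠ 0 := by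
    have h := had (2*(m':ℤ)) (by omega)
    intro hx; apply h; push_cast; linear_combination hx
  have hD1 : 2*a*((m':ℝ)+1)+d ≠ 0 := by
    have h := had (2*(m':ℤ)+2) (by omega)
    intro hx; apply h; push_cast; linear_combination hx
  have hF : a*(2*((m':ℝ)+1)-3)+d ≠ 0 := by
    have h := had (2*(m':ℤ)-1) (by omega)
    intro hx; apply h; push_cast; linear_combination hx
  have hF1 : a*(2*((m':ℝ)+1)-1)+d ≠ 0 := by
    have h := had (2*(m':ℤ)+1) (by omega)
    intro hx; apply h; push_cast; linear_combination hx
  -- recurrence coefficient extraction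
  have hr := hrec (m'+1) (by omega)
  rw [show m'+1-1 = m' from rfl, show m'+1+1 = m'+2 from rfl] at hr
  have hco : ∀ i : ℕ, (p (m'+2)).coeff i
      = A (m'+1) * (if 1 ≤ i then (p (m'+1)).coeff (i-1) else 0)
        + B (m'+1) * (p (m'+1)).coeff i - C (m'+1) * (p m').coeff i := by
    intro i
    rw [hr, show (Polynomial.C (A (m'+1)) * X + Polynomial.C (B (m'+1))) * p (m'+1)
        - Polynomial.C (C (m'+1)) * p m'
        = Polynomial.C (A (m'+1)) * (X^1 * p (m'+1)) + Polynomial.C (B (m'+1)) * p (m'+1)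
          - Polynomial.C (C (m'+1)) * p m' from by ring,
      coeff_sub, coeff_add, coeff_C_mul, coeff_C_mul, coeff_C_mul, coeff_X_pow_mul']
  have R1 : k (m'+2) = A (m'+1) * k (m'+1) := by
    have h := hco (m'+2)
    rw [if_pos (by omega), show m'+2-1 = m'+1 from rfl, hlead (m'+2), hlead (m'+1),
      hzc (m'+1) (m'+2) (by omega), hzc m' (m'+2) (by omega)] at h
    linear_combination h
  have R2 : (p (m'+2)).coeff (m'+1)
      = A (m'+1) * (p (m'+1)).coeff m' + B (m'+1) * k (m'+1) := by
    have h := hco (m'+1)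
    rw [if_pos (by omega), show m'+1-1 = m' from rfl, hlead (m'+1),
      hzc m' (m'+1) (by omega)] at h
    linear_combination h
  -- the t-coefficient data, with case split at m' = 0
  obtain ⟨tn, htn, R3⟩ : ∃ tn : ℝ,
      (48*(a*(2*((m':ℝ)+1)-3)+d) * tn
        = 2*a*((m':ℝ)+1)*(((m':ℝ)+1)-1)*(((m':ℝ)+1)-2)*(((m':ℝ)+1)-3)*(k (m'+1))
          + 24*b*(((m':ℝ)+1)-1)*(((m':ℝ)+1)-2)*((p (m'+1)).coeff m')
          + 24*c*((m':ℝ)+1)*(((m':ℝ)+1)-1)*(k (m'+1))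
          + d*(12*(((m':ℝ)+1)-1)*(((m':ℝ)+1)-2)*((p (m'+1)).coeff m')
              + 4*((m':ℝ)+1)*(((m':ℝ)+1)-1)*(((m':ℝ)+1)-2)*(k (m'+1)))
          + e*(24*(((m':ℝ)+1)-1)*((p (m'+1)).coeff m')
              + 12*((m':ℝ)+1)*(((m':ℝ)+1)-1)*(k (m'+1))))
      ∧ (p (m'+2)).coeff m'
          = A (m'+1) * tn + B (m'+1) * (p (m'+1)).coeff m' - C (m'+1) * k m' := by
    rcases Nat.eq_zero_or_pos m' with rfl | hm'
    · refine ⟨0, by push_cast; norm_num, ?_⟩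
      have h := hco 0
      rw [if_neg (by omega), hlead 0] at h
      norm_num at h ⊢
      linear_combination h
    · obtain ⟨q, rfl⟩ : ∃ q, m' = q+1 := ⟨m'-1, by omega⟩
      refine ⟨(p (q+2)).coeff q, ?_, ?_⟩
      · have h := HT (q+2) (by omega)
        rw [show q+2-2 = q from rfl, show q+2-1 = q+1 from rfl] at h
        push_cast at h ⊢
        linear_combination h
      · have h := hco (q+1)
        rw [if_pos (by omega), show q+1-1 = q from rfl, hlead (q+1)] at h
        linear_combination h
  -- gather s-relations
  have hs_n := HS (m'+1) (by omega)
  rw [show m'+1-1 = m' from rfl] at hs_n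
  have hs_p := HS (m'+2) (by omega)
  rw [show m'+2-1 = m'+1 from rfl] at hs_p
  have ht_p := HT (m'+2) (by omega)
  rw [show m'+2-2 = m' from rfl, show m'+2-1 = m'+1 from rfl] at ht_p
  obtain ⟨G1, G2, G3⟩ := drc_finalAlg a b c d e ((m':ℝ)+1) (k m') (k (m'+1)) (k (m'+2))
    ((p (m'+1)).coeff m') ((p (m'+2)).coeff (m'+1)) tn ((p (m'+2)).coeff m')
    (A (m'+1)) (B (m'+1)) (C (m'+1)) (hk0 (m'+1)) (hk0 m') hD hD1 hF hF1
    (by push_cast at hs_n ⊢; linear_combination hs_n)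
    (by push_cast at hs_p ⊢; linear_combination hs_p)
    htn
    (by push_cast at ht_p ⊢; linear_combination ht_p)
    (by linear_combination R1)
    (by linear_combination R2)
    (by linear_combination R3)
  refine ⟨by linear_combination G1, by push_cast; linear_combination G2,
    by push_cast; linear_combination G3⟩
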